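/- Let K be a separable complex Hilbert space and let J be a range function in K. Then J is measurable if and only if the map λ ↦ H²_{J(λ)} is a measurable range function in H²_K. -/

import Mathlib

noncomputable section

open MeasureTheory Complex Submodule
open scoped InnerProductSpace ENNReal ComplexConjugate

set_option synthInstance.maxHeartbeats 1000000
set_option maxHeartbeats 1600000

namespace ShiftPaper

instance : Fact ((0:ℝ) < 1) := ⟨one_pos⟩

/-- The circle, modelled as `ℝ/ℤ`. -/
abbrev 𝕋 : Type := UnitAddCircle

/-- The normalized Haar (Lebesgue) probability measure on the circle. -/
abbrev μT : Measure 𝕋 := AddCircle.haarAddCircle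

/-- The space `L²(𝕋, E)` of square-integrable `E`-valued functions on the circle. -/
abbrev L2 (E : Type*) [NormedAddCommGroup E] := Lp E 2 μT

lemma norm_fourier (n : ℤ) (t : 𝕋) : ‖fourier n t‖ = 1 := by
  rw [fourier_apply]
  exact Circle.norm_coe _

section mulF

variable {E : Type*} [NormedAddCommGroup E] [NormedSpace ℂ E]

lemma memLp_mulF (n : ℤ) (f : L2 E) :
    MemLp (fun t => fourier n t • (f : 𝕋 → E) t) 2 μT := by
  refine MemLp.of_le (Lp.memLp f)
    (((fourier n).continuous.aestronglyMeasurable).smul (Lp.aestronglyMeasurable f)) ?_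
  refine Filter.Eventually.of_forall fun t => ?_
  rw [norm_smul, norm_fourier, one_mul]

/-- Multiplication by `fourier n` (i.e. by `λ ↦ λⁿ`) as a bounded operator on `L²(𝕋, E)`.
For `n = 1` this is the bilateral shift `U`; for general `n : ℤ` it is `Uⁿ`. -/
def mulF (n : ℤ) : L2 E →L[ℂ] L2 E :=
  LinearMap.mkContinuous
    { toFun := fun f => (memLp_mulF n f).toLp _
      map_add' := fun f g => by
        rw [← MemLp.toLp_add (memLp_mulF n f) (memLp_mulF n g)]
        refine MemLp.toLp_congr _ _ ?_
        filter_upwards [Lp.coeFn_add f g] with t ht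
        simp only [ht, Pi.add_apply, smul_add]
      map_smul' := fun c f => by
        simp only [RingHom.id_apply]
        rw [← MemLp.toLp_const_smul c (memLp_mulF n f)]
        refine MemLp.toLp_congr _ _ ?_
        filter_upwards [Lp.coeFn_smul c f] with t ht
        rw [ht]
        simp only [Pi.smul_apply]
        rw [smul_comm] }
    1
    (fun f => by
      simp only [LinearMap.coe_mk, AddHom.coe_mk, one_mul]
      rw [Lp.norm_toLp _ (memLp_mulF n f), Lp.norm_def]
      refine le_of_eq (congrArg ENNReal.toReal ?_)
      refine eLpNorm_congr_norm_ae ?_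
      refine Filter.Eventually.of_forall fun t => ?_
      rw [norm_smul, norm_fourier, one_mul])

lemma coeFn_mulF (n : ℤ) (f : L2 E) :
    (mulF n f : 𝕋 → E) =ᵐ[μT] fun t => fourier n t • (f : 𝕋 → E) t :=
  MemLp.coeFn_toLp (memLp_mulF n f)

end mulF

section HardySpace

variable (K : Type) [NormedAddCommGroup K] [InnerProductSpace ℂ K] [CompleteSpace K]

/-- The continuous function `t ↦ fourier n t • x`. -/
def fourierSmulCM (n : ℤ) (x : K) : C(𝕋, K) :=
  ⟨fun t => fourier n t • x, (fourier n).continuous.smul continuous_const⟩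

/-- The element of `L²(𝕋, K)` given by `t ↦ fourier n t • x`. -/
def expVec (n : ℤ) (x : K) : L2 K := ContinuousMap.toLp 2 μT ℂ (fourierSmulCM K n x)

lemma coeFn_expVec (n : ℤ) (x : K) :
    (expVec K n x : 𝕋 → K) =ᵐ[μT] fun t => fourier n t • x :=
  ContinuousMap.coeFn_toLp (𝕜 := ℂ) μT (fourierSmulCM K n x)

/-- The Hardy space `H²(𝕋, K)`, as the subspace of `L²(𝕋, K)` of functions all of whose
weak Fourier coefficients of negative index vanish (equivalently, all of whose coordinate
functions with respect to an orthonormal basis of `K` lie in the scalar Hardy space `H²`). -/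
def Hardy : Submodule ℂ (L2 K) :=
  ⨅ (n : ℤ) (_ : n < 0) (x : K), LinearMap.ker (innerSL ℂ (expVec K n x) : L2 K →ₗ[ℂ] ℂ)

lemma isClosed_Hardy : IsClosed ((Hardy K : Set (L2 K))) := by
  have h : (Hardy K : Set (L2 K)) = ⋂ (n : ℤ) (_ : n < 0) (x : K),
      (LinearMap.ker (innerSL ℂ (expVec K n x) : L2 K →ₗ[ℂ] ℂ) : Set (L2 K)) := by
    simp only [Hardy, Submodule.coe_iInf]
  rw [h]
  exact isClosed_iInter fun n => isClosed_iInter fun _ => isClosed_iInter fun x =>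
    (ContinuousLinearMap.isClosed_ker _)

/-- The Hardy space `H²(𝕋, K)` as a Hilbert space in its own right. -/
abbrev H2 := ↥(Hardy K)

instance : CompleteSpace (H2 K) := (isClosed_Hardy K).completeSpace_coe

end HardySpace


section Shift

variable (K : Type) [NormedAddCommGroup K] [InnerProductSpace ℂ K] [CompleteSpace K]

lemma inner_expVec_mulF (n : ℤ) (x : K) (f : L2 K) :
    (inner ℂ (expVec K n x) (mulF 1 f) : ℂ) = inner ℂ (expVec K (n - 1) x) f := by
  rw [MeasureTheory.L2.inner_def, MeasureTheory.L2.inner_def]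
  refine integral_congr_ae ?_
  filter_upwards [coeFn_mulF 1 f, coeFn_expVec K n x, coeFn_expVec K (n-1) x] with t h1 h2 h3
  rw [h1, h2, h3, inner_smul_left, inner_smul_left, inner_smul_right,
    ← fourier_neg, ← fourier_neg, ← mul_assoc, ← fourier_add]
  have h : -n + 1 = -(n - 1) := by ring
  rw [h]

lemma mulF_mem_hardy {f : L2 K} (hf : f ∈ Hardy K) : mulF 1 f ∈ Hardy K := by
  simp only [Hardy, Submodule.mem_iInf, LinearMap.mem_ker, ContinuousLinearMap.coe_coe, innerSL_apply_apply] at hf ⊢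
  intro n hn x
  rw [inner_expVec_mulF]
  exact hf (n - 1) (by omega) x

/-- The unilateral shift `S` on the Hardy space `H²(𝕋, K)`: the restriction of the
bilateral shift (multiplication by the variable) to the Hardy space. -/
def S : H2 K →L[ℂ] H2 K where
  toLinearMap := (mulF (E := K) 1).toLinearMap.restrict
    (p := Hardy K) (q := Hardy K) (fun _ hx => mulF_mem_hardy K hx)
  cont := by
    apply Continuous.subtype_mk
    exact (mulF (E := K) 1).continuous.comp continuous_subtype_val

/-- The operator `Ŝ` on `L²(𝕋, H²(𝕋,K))`, acting pointwisely (on the values) as the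
unilateral shift `S`. -/
def Shat : L2 (H2 K) →L[ℂ] L2 (H2 K) := (S K).compLpL 2 μT

lemma integral_fourier_eq_zero {m : ℤ} (hm : m ≠ 0) :
    ∫ t : 𝕋, fourier m t ∂μT = 0 := by
  have h0 : ((0:ℤ)) ≠ m := fun h => hm h.symm
  have h : (inner ℂ (fourierLp (T := 1) 2 (0:ℤ)) (fourierLp 2 m) : ℂ) = 0 :=
    orthonormal_fourier.2 h0
  rw [MeasureTheory.L2.inner_def] at h
  rw [← h]
  refine integral_congr_ae ?_
  filter_upwards [coeFn_fourierLp 2 (0:ℤ), coeFn_fourierLp 2 m] with t h1 h2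
  rw [h1, h2]
  simp [fourier_zero]

lemma const_mem_hardy (x : K) : expVec K 0 x ∈ Hardy K := by
  simp only [Hardy, Submodule.mem_iInf, LinearMap.mem_ker, ContinuousLinearMap.coe_coe, innerSL_apply_apply]
  intro n hn y
  rw [MeasureTheory.L2.inner_def]
  have h : ∀ᵐ t ∂μT, (inner ℂ ((expVec K n y : 𝕋 → K) t) ((expVec K 0 x : 𝕋 → K) t) : ℂ)
      = fourier (-n) t * (inner ℂ y x : ℂ) := by
    filter_upwards [coeFn_expVec K n y, coeFn_expVec K 0 x] with t h1 h2
    rw [h1, h2, inner_smul_left, inner_smul_right, ← fourier_neg, fourier_zero, one_mul]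
  rw [integral_congr_ae h, integral_mul_const,
    integral_fourier_eq_zero (by omega), zero_mul]

/-- The linear embedding of `K` into `H²(𝕋,K)` as constant functions. -/
def constL : K →ₗ[ℂ] H2 K where
  toFun x := ⟨expVec K 0 x, const_mem_hardy K x⟩
  map_add' x y := by
    apply Subtype.ext
    simp only [Submodule.coe_add]
    unfold expVec
    rw [← map_add]
    congr 1
    ext t
    simp [fourierSmulCM, smul_add]
  map_smul' c x := by
    apply Subtype.ext
    simp only [RingHom.id_apply, SetLike.val_smul]
    unfold expVec
    rw [← _root_.map_smul]
    congr 1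
    ext t
    simp [fourierSmulCM]

end Shift


section RangeFunctions

variable {F : Type*} [NormedAddCommGroup F] [InnerProductSpace ℂ F] [CompleteSpace F]

/-- The orthogonal projection onto a closed subspace, as a plain function (defined to be `0`
if the subspace is not closed). -/
def projTo (N : Submodule ℂ F) (x : F) : F :=
  letI := Classical.dec (IsClosed ((N : Set F)))
  if h : IsClosed ((N : Set F)) then
    haveI : CompleteSpace N := h.completeSpace_coe
    (orthogonalProjection N x : F)
  else 0

/-- A measurable range function in `F`: a map `J` from `𝕋` to closed subspaces of `F` such
that `t ↦ ⟪P_{J(t)} x, y⟫` is measurable for every `x, y ∈ F`. -/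
def IsMeasRange (J : 𝕋 → Submodule ℂ F) : Prop :=
  (∀ t, IsClosed ((J t : Set F))) ∧
  ∀ x y : F, Measurable fun t => (inner ℂ (projTo (J t) x) y : ℂ)

/-- The set of `f ∈ L²(𝕋, E)` such that `f(t) ∈ J(t)` for a.e. `t ∈ 𝕋`. -/
def rangeSet {E : Type*} [NormedAddCommGroup E] [NormedSpace ℂ E]
    (J : 𝕋 → Submodule ℂ E) : Set (L2 E) :=
  {f | ∀ᵐ t ∂μT, (f : 𝕋 → E) t ∈ J t}

end RangeFunctions

section OperatorNotions

variable {E : Type*} [NormedAddCommGroup E] [NormedSpace ℂ E]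

/-- A subspace `M` is invariant under the bounded operator `A` if `A(M) ⊆ M`. -/
def InvariantUnder (A : E →L[ℂ] E) (M : Submodule ℂ E) : Prop :=
  ∀ f ∈ M, A f ∈ M

/-- Two bounded operators commute. -/
def CommutesWith (A B : E →L[ℂ] E) : Prop := ∀ f, A (B f) = B (A f)

variable {F : Type*} [NormedAddCommGroup F] [InnerProductSpace ℂ F]

/-- A subspace `M` is reducing for `A` if both `M` and `M^⊥` are invariant under `A`. -/
def Reducing (A : F →L[ℂ] F) (M : Submodule ℂ F) : Prop :=
  InvariantUnder A M ∧ InvariantUnder A Mᗮ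

/-- `Φ` is a partial isometry with initial space `W`: it is isometric on `W` and vanishes
on `W^⊥`. -/
def IsPartialIsometryOn (Φ : F →L[ℂ] F) (W : Submodule ℂ F) : Prop :=
  (∀ f ∈ W, ‖Φ f‖ = ‖f‖) ∧ ∀ f ∈ Wᗮ, Φ f = 0

end OperatorNotions

section FullHardy

variable (K : Type) [NormedAddCommGroup K] [InnerProductSpace ℂ K] [CompleteSpace K]

/-- For a subspace `N ⊆ K`, the subspace `H²_N` of `H²_K`: those elements of the Hardy space
taking values in `N` almost everywhere. -/
def hardyIn (N : Submodule ℂ K) : Submodule ℂ (H2 K) where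
  carrier := {g | ∀ᵐ z ∂μT, ((g : L2 K) : 𝕋 → K) z ∈ N}
  zero_mem' := by
    have h0 : ((0 : H2 K) : L2 K) = 0 := rfl
    rw [Set.mem_setOf_eq, h0]
    filter_upwards [Lp.coeFn_zero K 2 μT] with z hz
    rw [hz]
    exact N.zero_mem
  add_mem' := by
    intro a b ha hb
    have h0 : ((a + b : H2 K) : L2 K) = (a : L2 K) + (b : L2 K) := rfl
    rw [Set.mem_setOf_eq, h0]
    filter_upwards [ha, hb, Lp.coeFn_add (a : L2 K) (b : L2 K)] with z ha' hb' hadd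
    rw [hadd]
    exact N.add_mem ha' hb'
  smul_mem' := by
    intro c a ha
    have h0 : ((c • a : H2 K) : L2 K) = c • (a : L2 K) := rfl
    rw [Set.mem_setOf_eq, h0]
    filter_upwards [ha, Lp.coeFn_smul c (a : L2 K)] with z ha' hsmul
    rw [hsmul]
    exact N.smul_mem c ha'

/-- The set of `f ∈ L²(𝕋, H²_K)` with `f(t) ∈ H²_{J(t)}` for a.e. `t`. If `J` is a measurable
range function in `K`, this is the full-Hardy subspace with base `J`. -/
def fullHardySet (J : 𝕋 → Submodule ℂ K) : Set (L2 (H2 K)) :=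
  {f | ∀ᵐ t ∂μT, (f : 𝕋 → H2 K) t ∈ hardyIn K (J t)}

/-- A subspace `W ⊆ L²(𝕋, H²_K)` is full-Hardy if it is of the form
`{f : f(t) ∈ H²_{J(t)} a.e.}` for some measurable range function `J` in `K`. -/
def IsFullHardy (W : Submodule ℂ (L2 (H2 K))) : Prop :=
  ∃ J : 𝕋 → Submodule ℂ K, IsMeasRange J ∧ (W : Set (L2 (H2 K))) = fullHardySet K J

end FullHardy

section Dimension

open scoped Classical in
/-- The Hilbert-space dimension of a subspace, as an element of `ℕ∞` (in a separable ambient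
space this is the cardinality of any orthonormal basis). -/
def dimSub {F : Type*} [NormedAddCommGroup F] [InnerProductSpace ℂ F]
    (N : Submodule ℂ F) : ℕ∞ :=
  if FiniteDimensional ℂ ↥N then (Module.finrank ℂ ↥N : ℕ∞) else ⊤

end Dimension

section ScalarCase

/-- Evaluation of an element of the scalar Hardy space (via its chosen representative). -/
def ev (g : H2 ℂ) (z : 𝕋) : ℂ := ((g : L2 ℂ) : 𝕋 → ℂ) z

/-- Iterated evaluation of an element of `L²(𝕋, H²)`. -/
def ev2 (f : L2 (H2 ℂ)) (t z : 𝕋) : ℂ := ev ((f : 𝕋 → H2 ℂ) t) z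

/-- A function `h ∈ H²` is inner if `|h(z)| = 1` for a.e. `z ∈ 𝕋`. -/
def IsInnerFn (g : H2 ℂ) : Prop := ∀ᵐ z ∂μT, ‖ev g z‖ = 1

lemma ev_zero : ∀ᵐ z ∂μT, ev (0 : H2 ℂ) z = 0 := by
  have h0 : ((0 : H2 ℂ) : L2 ℂ) = 0 := rfl
  unfold ev
  rw [h0]
  filter_upwards [Lp.coeFn_zero ℂ 2 μT] with z hz
  rw [hz]
  rfl

lemma ev_add (u v : H2 ℂ) : ∀ᵐ z ∂μT, ev (u + v) z = ev u z + ev v z := by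
  have h0 : ((u + v : H2 ℂ) : L2 ℂ) = (u : L2 ℂ) + (v : L2 ℂ) := rfl
  unfold ev
  rw [h0]
  filter_upwards [Lp.coeFn_add (u : L2 ℂ) (v : L2 ℂ)] with z hz
  rw [hz]
  rfl

lemma ev_smul (c : ℂ) (u : H2 ℂ) : ∀ᵐ z ∂μT, ev (c • u) z = c * ev u z := by
  have h0 : ((c • u : H2 ℂ) : L2 ℂ) = c • (u : L2 ℂ) := rfl
  unfold ev
  rw [h0]
  filter_upwards [Lp.coeFn_smul c (u : L2 ℂ)] with z hz
  rw [hz]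
  rfl

/-- For `w ∈ H²`, the subspace `w·H² = {w·k : k ∈ H²}` of `H²` (membership described via
a.e. pointwise multiplication of representatives). -/
def mulSet (w : H2 ℂ) : Submodule ℂ (H2 ℂ) where
  carrier := {u | ∃ k : H2 ℂ, ∀ᵐ z ∂μT, ev u z = ev w z * ev k z}
  zero_mem' := by
    refine ⟨0, ?_⟩
    filter_upwards [ev_zero] with z hz
    rw [hz, mul_zero]
  add_mem' := by
    rintro u v ⟨k₁, h₁⟩ ⟨k₂, h₂⟩
    refine ⟨k₁ + k₂, ?_⟩
    filter_upwards [h₁, h₂, ev_add u v, ev_add k₁ k₂] with z e1 e2 e3 e4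
    rw [e3, e1, e2, e4, mul_add]
  smul_mem' := by
    rintro c u ⟨k, h⟩
    refine ⟨c • k, ?_⟩
    filter_upwards [h, ev_smul c u, ev_smul c k] with z e1 e2 e3
    rw [e2, e1, e3]
    ring

/-- The set `φ·L²(𝕋, H²) = {φ g : g ∈ L²(𝕋,H²)}`, where `(φ g)(t)(z) = φ(t)(z)·g(t)(z)`. -/
def timesSet (φ : L2 (H2 ℂ)) : Set (L2 (H2 ℂ)) :=
  {h | ∃ g : L2 (H2 ℂ), ∀ᵐ t ∂μT, ∀ᵐ z ∂μT, ev2 h t z = ev2 φ t z * ev2 g t z}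

end ScalarCase

section AuxProj

variable {F : Type*} [NormedAddCommGroup F] [InnerProductSpace ℂ F] [CompleteSpace F]

lemma projTo_eq {N : Submodule ℂ F} (h : IsClosed (N : Set F)) (x : F) :
    projTo N x = (haveI := h.completeSpace_coe; ((orthogonalProjection N x : N) : F)) := by
  unfold projTo
  rw [dif_pos h]

lemma projTo_mem {N : Submodule ℂ F} (h : IsClosed (N : Set F)) (x : F) :
    projTo N x ∈ N := by
  haveI := h.completeSpace_coe
  rw [projTo_eq h]
  exact (orthogonalProjection N x).2

lemma projTo_zero {N : Submodule ℂ F} (h : IsClosed (N : Set F)) :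
    projTo N (0 : F) = 0 := by
  haveI := h.completeSpace_coe
  rw [projTo_eq h]
  simp

lemma projTo_add {N : Submodule ℂ F} (h : IsClosed (N : Set F)) (x y : F) :
    projTo N (x + y) = projTo N x + projTo N y := by
  haveI := h.completeSpace_coe
  simp only [projTo_eq h]
  rw [map_add]
  rfl

lemma norm_projTo_le {N : Submodule ℂ F} (h : IsClosed (N : Set F)) (x : F) :
    ‖projTo N x‖ ≤ ‖x‖ := by
  haveI := h.completeSpace_coe
  rw [projTo_eq h]
  calc ‖((orthogonalProjection N x : N) : F)‖ = ‖orthogonalProjection N x‖ := rfl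
    _ ≤ ‖orthogonalProjection N‖ * ‖x‖ := (orthogonalProjection N).le_opNorm x
    _ ≤ 1 * ‖x‖ := by
        gcongr
        exact orthogonalProjection_norm_le N
    _ = ‖x‖ := one_mul ‖x‖

lemma continuous_projTo {N : Submodule ℂ F} (h : IsClosed (N : Set F)) :
    Continuous (projTo N) := by
  haveI := h.completeSpace_coe
  have : projTo N = fun x => ((orthogonalProjection N x : N) : F) := funext (projTo_eq h)
  rw [this]
  exact continuous_subtype_val.comp (orthogonalProjection N).continuous

lemma inner_projTo_left_eq_right {N : Submodule ℂ F} (h : IsClosed (N : Set F)) (x y : F) :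
    (inner ℂ (projTo N x) y : ℂ) = inner ℂ x (projTo N y) := by
  haveI := h.completeSpace_coe
  simp only [projTo_eq h]
  exact N.inner_starProjection_left_eq_right x y

lemma inner_sub_projTo_of_mem {N : Submodule ℂ F} (h : IsClosed (N : Set F)) (x : F)
    {w : F} (hw : w ∈ N) : (inner ℂ (x - projTo N x) w : ℂ) = 0 := by
  haveI := h.completeSpace_coe
  simp only [projTo_eq h]
  exact starProjection_inner_eq_zero (K := N) x w hw

end AuxProj

section AuxHardy

variable (K : Type) [NormedAddCommGroup K] [InnerProductSpace ℂ K] [CompleteSpace K]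
  [SecondCountableTopology K]

lemma mem_hardyIn {N : Submodule ℂ K} {g : H2 K} :
    g ∈ hardyIn K N ↔ ∀ᵐ z ∂μT, ((g : L2 K) : 𝕋 → K) z ∈ N := Iff.rfl

lemma exists_orthoSeq (N : Submodule ℂ K) (h : IsClosed (N : Set K)) :
    ∃ u : ℕ → K, ∀ x : K, (x ∈ N ↔ ∀ n, (inner ℂ (u n) x : ℂ) = 0) := by
  haveI := h.completeSpace_coe
  haveI : Nonempty ↥(Nᗮ) := ⟨0⟩
  set u : ℕ → ↥(Nᗮ) := TopologicalSpace.denseSeq ↥(Nᗮ) with hu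
  refine ⟨fun n => (u n : K), fun x => ?_⟩
  constructor
  · intro hx n
    rw [inner_eq_zero_symm]
    exact ((Submodule.mem_orthogonal N (u n)).1 (u n).2) x hx
  · intro hx
    rw [← N.orthogonal_orthogonal]
    rw [Submodule.mem_orthogonal]
    intro v hv
    have hvmem : (⟨v, hv⟩ : ↥(Nᗮ)) ∈ closure (Set.range u) := by
      rw [(TopologicalSpace.denseRange_denseSeq ↥(Nᗮ)).closure_eq]
      trivial
    obtain ⟨w, hwmem, hwlim⟩ := mem_closure_iff_seq_limit.1 hvmem
    have h1 : Filter.Tendsto (fun k => ((w k : K))) Filter.atTop (nhds v) :=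
      (continuous_subtype_val.tendsto _).comp hwlim
    have h2 : Filter.Tendsto (fun k => (inner ℂ ((w k : K)) x : ℂ)) Filter.atTop
        (nhds (inner ℂ v x)) := h1.inner tendsto_const_nhds
    have h3 : (fun k => (inner ℂ ((w k : K)) x : ℂ)) = fun _ => (0 : ℂ) := by
      funext k
      obtain ⟨n, hn⟩ := hwmem k
      rw [← hn]
      exact hx n
    rw [h3] at h2
    exact tendsto_nhds_unique h2 tendsto_const_nhds

lemma isClosed_hardyIn {N : Submodule ℂ K} (h : IsClosed (N : Set K)) :
    IsClosed ((hardyIn K N : Set (H2 K))) := by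
  obtain ⟨u, hmem⟩ := exists_orthoSeq K N h
  have hset : (hardyIn K N : Set (H2 K)) =
      ⋂ n, ((fun f : H2 K => ((innerSL ℂ (u n)).compLpL 2 μT) (f : L2 K)) ⁻¹' {0}) := by
    ext f
    simp only [Set.mem_iInter, Set.mem_preimage, Set.mem_singleton_iff, SetLike.mem_coe,
      mem_hardyIn]
    constructor
    · intro hf n
      rw [Lp.eq_zero_iff_ae_eq_zero]
      filter_upwards [ContinuousLinearMap.coeFn_compLpL (innerSL ℂ (u n)) (f : L2 K), hf]
        with z h1 h2
      rw [h1]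
      simpa using (hmem _).1 h2 n
    · intro hf
      have h' : ∀ n, ∀ᵐ z ∂μT, (inner ℂ (u n) (((f : L2 K) : 𝕋 → K) z) : ℂ) = 0 := by
        intro n
        have := (Lp.eq_zero_iff_ae_eq_zero).1 (hf n)
        filter_upwards [ContinuousLinearMap.coeFn_compLpL (innerSL ℂ (u n)) (f : L2 K),
          this] with z h1 h2
        rw [h1] at h2
        simpa using h2
      filter_upwards [MeasureTheory.ae_all_iff.2 h'] with z hz
      exact (hmem _).2 hz
  rw [hset]
  refine isClosed_iInter fun n => IsClosed.preimage ?_ isClosed_singleton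
  exact (((innerSL ℂ (u n)).compLpL 2 μT).continuous).comp continuous_subtype_val

lemma hardy_proj_formula {N : Submodule ℂ K} (h : IsClosed (N : Set K)) (f g : H2 K) :
    (inner ℂ (projTo (hardyIn K N) f) g : ℂ)
      = ∫ t, (inner ℂ (projTo N (((f : L2 K) : 𝕋 → K) t)) (((g : L2 K) : 𝕋 → K) t) : ℂ) ∂μT := by
  haveI := h.completeSpace_coe
  set P : K →L[ℂ] K := N.subtypeL.comp (orthogonalProjection N) with hP
  have hPapply : ∀ x : K, P x = projTo N x := by
    intro x
    rw [projTo_eq h]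
    rfl
  set Pf : L2 K := P.compLpL 2 μT (f : L2 K) with hPf
  have hPfcoe : (Pf : 𝕋 → K) =ᵐ[μT] fun t => P (((f : L2 K) : 𝕋 → K) t) :=
    ContinuousLinearMap.coeFn_compLpL P (f : L2 K)
  -- Pf lies in the Hardy space
  have hHardy : Pf ∈ Hardy K := by
    have hfH := f.2
    simp only [Hardy, Submodule.mem_iInf, LinearMap.mem_ker, ContinuousLinearMap.coe_coe, innerSL_apply_apply] at hfH ⊢
    intro n hn x
    have hkey : (inner ℂ (expVec K n x) Pf : ℂ)
        = inner ℂ (expVec K n ((orthogonalProjection N x : N) : K)) (f : L2 K) := by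
      rw [MeasureTheory.L2.inner_def, MeasureTheory.L2.inner_def]
      refine integral_congr_ae ?_
      filter_upwards [hPfcoe, coeFn_expVec K n x,
        coeFn_expVec K n ((orthogonalProjection N x : N) : K)] with t h1 h2 h3
      rw [h1, h2, h3, inner_smul_left, inner_smul_left]
      congr 1
      have : (inner ℂ x (P (((f : L2 K) : 𝕋 → K) t)) : ℂ)
          = inner ℂ ((orthogonalProjection N x : N) : K) (((f : L2 K) : 𝕋 → K) t) := by
        rw [hP]
        exact (N.inner_starProjection_left_eq_right x _).symm
      rw [this]
    rw [hkey]
    exact hfH n hn _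
  -- Pf has values in N a.e.
  set Ff : H2 K := ⟨Pf, hHardy⟩ with hFf
  have hmemH : Ff ∈ hardyIn K N := by
    rw [mem_hardyIn]
    filter_upwards [hPfcoe] with t ht
    show (Pf : 𝕋 → K) t ∈ N
    rw [ht]
    exact (orthogonalProjection N _).2
  -- orthogonality
  have horth : ∀ w ∈ hardyIn K N, (inner ℂ (f - Ff) w : ℂ) = 0 := by
    intro w hw
    rw [mem_hardyIn] at hw
    have hcoe : ((f - Ff : H2 K) : L2 K) = (f : L2 K) - Pf := rfl
    rw [Submodule.coe_inner, hcoe, MeasureTheory.L2.inner_def]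
    have hz : ∀ᵐ t ∂μT,
        (inner ℂ ((((f : L2 K) - Pf : L2 K) : 𝕋 → K) t) (((w : L2 K) : 𝕋 → K) t) : ℂ) = 0 := by
      filter_upwards [Lp.coeFn_sub (f : L2 K) Pf, hPfcoe, hw] with t h1 h2 h3
      rw [h1]
      simp only [Pi.sub_apply]
      rw [h2]
      exact starProjection_inner_eq_zero (K := N) _ _ h3
    rw [integral_congr_ae hz, integral_zero]
  -- identify the projection
  have hclH := isClosed_hardyIn K h
  haveI := hclH.completeSpace_coe
  have hproj : projTo (hardyIn K N) f = Ff := by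
    rw [projTo_eq hclH]
    exact eq_starProjection_of_mem_of_inner_eq_zero hmemH horth
  rw [hproj, Submodule.coe_inner]
  rw [MeasureTheory.L2.inner_def]
  refine integral_congr_ae ?_
  filter_upwards [hPfcoe] with t ht
  rw [ht, hPapply]

lemma measurable_integral_proj {J : 𝕋 → Submodule ℂ K} (hJ : IsMeasRange J) (f g : L2 K) :
    Measurable fun t => ∫ z,
      (inner ℂ (projTo (J t) ((f : 𝕋 → K) z)) ((g : 𝕋 → K) z) : ℂ) ∂μT := by
  obtain ⟨hcJ, hm⟩ := hJ
  have hgi : Integrable (g : 𝕋 → K) μT := (Lp.memLp g).integrable one_le_two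
  -- integrability of the integrand for simple functions
  have hint : ∀ (t : 𝕋) (s : MeasureTheory.SimpleFunc 𝕋 K),
      Integrable (fun z => (inner ℂ (projTo (J t) (s z)) ((g : 𝕋 → K) z) : ℂ)) μT := by
    intro t s
    obtain ⟨C, hC⟩ := s.exists_forall_norm_le
    refine Integrable.mono' (hgi.norm.const_mul C) ?_ ?_
    · have hsm : StronglyMeasurable fun z => projTo (J t) (s z) := by
        have : (fun z => projTo (J t) (s z)) = ⇑(s.map (projTo (J t))) := rfl
        rw [this]
        exact (s.map (projTo (J t))).stronglyMeasurable
      exact hsm.aestronglyMeasurable.inner (Lp.aestronglyMeasurable g)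
    · refine Filter.Eventually.of_forall fun z => ?_
      calc ‖(inner ℂ (projTo (J t) (s z)) ((g : 𝕋 → K) z) : ℂ)‖
          ≤ ‖projTo (J t) (s z)‖ * ‖(g : 𝕋 → K) z‖ := norm_inner_le_norm _ _
        _ ≤ C * ‖(g : 𝕋 → K) z‖ := by
            gcongr
            exact le_trans (norm_projTo_le (hcJ t) _) (hC z)
  -- measurability for simple functions
  have hsimple : ∀ s : MeasureTheory.SimpleFunc 𝕋 K,
      Measurable fun t => ∫ z, (inner ℂ (projTo (J t) (s z)) ((g : 𝕋 → K) z) : ℂ) ∂μT := by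
    intro s
    induction s using MeasureTheory.SimpleFunc.induction with
    | @const c A hA =>
      have heq : (fun t => ∫ z, (inner ℂ (projTo (J t)
          ((MeasureTheory.SimpleFunc.piecewise A hA (MeasureTheory.SimpleFunc.const 𝕋 c)
            (MeasureTheory.SimpleFunc.const 𝕋 0)) z)) ((g : 𝕋 → K) z) : ℂ) ∂μT)
          = fun t => (inner ℂ (projTo (J t) c) (∫ z in A, (g : 𝕋 → K) z ∂μT) : ℂ) := by
        funext t
        have h1 : (fun z => (inner ℂ (projTo (J t)
            ((MeasureTheory.SimpleFunc.piecewise A hA (MeasureTheory.SimpleFunc.const 𝕋 c)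
              (MeasureTheory.SimpleFunc.const 𝕋 0)) z)) ((g : 𝕋 → K) z) : ℂ))
            = fun z => A.indicator (fun z => (inner ℂ (projTo (J t) c) ((g : 𝕋 → K) z) : ℂ)) z := by
          funext z
          by_cases hz : z ∈ A
          · simp [MeasureTheory.SimpleFunc.piecewise_apply, hz, Set.indicator_of_mem]
          · simp [MeasureTheory.SimpleFunc.piecewise_apply, hz, Set.indicator_of_notMem,
              projTo_zero (hcJ t)]
        rw [h1, MeasureTheory.integral_indicator hA]
        exact integral_inner hgi.integrableOn _
      rw [heq]
      exact hm c _
    | @add s₁ s₂ hdisj h1 h2 =>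
      have heq : (fun t => ∫ z, (inner ℂ (projTo (J t) ((s₁ + s₂) z)) ((g : 𝕋 → K) z) : ℂ) ∂μT)
          = fun t => (∫ z, (inner ℂ (projTo (J t) (s₁ z)) ((g : 𝕋 → K) z) : ℂ) ∂μT)
            + ∫ z, (inner ℂ (projTo (J t) (s₂ z)) ((g : 𝕋 → K) z) : ℂ) ∂μT := by
        funext t
        rw [← integral_add (hint t s₁) (hint t s₂)]
        refine integral_congr_ae (Filter.Eventually.of_forall fun z => ?_)
        simp only [MeasureTheory.SimpleFunc.coe_add, Pi.add_apply]
        rw [projTo_add (hcJ t), inner_add_left]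
      rw [heq]
      exact h1.add h2
  -- approximation
  letI : MeasurableSpace K := borel K
  haveI : BorelSpace K := ⟨rfl⟩
  have hfaesm := Lp.aestronglyMeasurable f
  set f' := hfaesm.mk (f : 𝕋 → K) with hf'
  have hf'sm : StronglyMeasurable f' := hfaesm.stronglyMeasurable_mk
  have hae : (f : 𝕋 → K) =ᵐ[μT] f' := hfaesm.ae_eq_mk
  have hf'meas : Measurable f' := hf'sm.measurable
  set s : ℕ → MeasureTheory.SimpleFunc 𝕋 K := fun n =>
    MeasureTheory.SimpleFunc.approxOn f' hf'meas Set.univ 0 (Set.mem_univ 0) n with hs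
  have hslim : ∀ z, Filter.Tendsto (fun n => s n z) Filter.atTop (nhds (f' z)) := by
    intro z
    exact MeasureTheory.SimpleFunc.tendsto_approxOn hf'meas (Set.mem_univ 0)
      (by simp [closure_univ])
  have hsbd : ∀ n z, ‖s n z‖ ≤ ‖f' z‖ + ‖f' z‖ := fun n z =>
    MeasureTheory.SimpleFunc.norm_approxOn_zero_le hf'meas (Set.mem_univ 0) z n
  -- integrable bound
  have hf2 : MemLp f' 2 μT := (Lp.memLp f).ae_eq hae
  have hbound : Integrable (fun z => (‖f' z‖ + ‖f' z‖) * ‖(g : 𝕋 → K) z‖) μT := by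
    have ha : Integrable (fun z => ‖f' z‖ * ‖(g : 𝕋 → K) z‖) μT := by
      have h1 := MeasureTheory.L2.integrable_inner (𝕜 := ℝ)
        (hf2.norm.toLp _) (((Lp.memLp g).norm).toLp _)
      refine h1.congr ?_
      filter_upwards [MemLp.coeFn_toLp hf2.norm, MemLp.coeFn_toLp (Lp.memLp g).norm]
        with z h2 h3
      rw [h2, h3]
      simp [RCLike.inner_apply, starRingEnd_apply, mul_comm]
    have : (fun z => (‖f' z‖ + ‖f' z‖) * ‖(g : 𝕋 → K) z‖)
        = fun z => ‖f' z‖ * ‖(g : 𝕋 → K) z‖ + ‖f' z‖ * ‖(g : 𝕋 → K) z‖ := by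
      funext z; ring
    rw [this]
    exact ha.add ha
  -- pass to the limit
  have hmeas' : Measurable fun t => ∫ z,
      (inner ℂ (projTo (J t) (f' z)) ((g : 𝕋 → K) z) : ℂ) ∂μT := by
    refine measurable_of_tendsto_metrizable (fun n => hsimple (s n)) ?_
    rw [tendsto_pi_nhds]
    intro t
    refine MeasureTheory.tendsto_integral_of_dominated_convergence
      (fun z => (‖f' z‖ + ‖f' z‖) * ‖(g : 𝕋 → K) z‖) (fun n => (hint t (s n)).1) hbound
      (fun n => Filter.Eventually.of_forall fun z => ?_)
      (Filter.Eventually.of_forall fun z => ?_)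
    · calc ‖(inner ℂ (projTo (J t) (s n z)) ((g : 𝕋 → K) z) : ℂ)‖
          ≤ ‖projTo (J t) (s n z)‖ * ‖(g : 𝕋 → K) z‖ := norm_inner_le_norm _ _
        _ ≤ (‖f' z‖ + ‖f' z‖) * ‖(g : 𝕋 → K) z‖ := by
            gcongr
            exact le_trans (norm_projTo_le (hcJ t) _) (hsbd n z)
    · exact (((continuous_projTo (hcJ t)).tendsto _).comp (hslim z)).inner
        tendsto_const_nhds
  have hfeq : (fun t => ∫ z, (inner ℂ (projTo (J t) ((f : 𝕋 → K) z)) ((g : 𝕋 → K) z) : ℂ) ∂μT)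
      = fun t => ∫ z, (inner ℂ (projTo (J t) (f' z)) ((g : 𝕋 → K) z) : ℂ) ∂μT := by
    funext t
    refine integral_congr_ae ?_
    filter_upwards [hae] with z hz
    rw [hz]
  rw [hfeq]
  exact hmeas'

end AuxHardy
section Statements

variable (K : Type) [NormedAddCommGroup K] [InnerProductSpace ℂ K] [CompleteSpace K]
  [SecondCountableTopology K]

theorem statement11 (J : 𝕋 → Submodule ℂ K) (hc : ∀ t, IsClosed ((J t : Set K))) :
    IsMeasRange J ↔ IsMeasRange (fun t => hardyIn K (J t)) := by
  constructor
  · intro hJ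
    refine ⟨fun t => isClosed_hardyIn K (hc t), fun x y => ?_⟩
    have h1 := measurable_integral_proj K hJ (x : L2 K) (y : L2 K)
    show Measurable fun t => (inner ℂ (projTo (hardyIn K (J t)) x) y : ℂ)
    have heq : (fun t => (inner ℂ (projTo (hardyIn K (J t)) x) y : ℂ))
        = fun t => ∫ z, (inner ℂ (projTo (J t) (((x : L2 K) : 𝕋 → K) z))
            (((y : L2 K) : 𝕋 → K) z) : ℂ) ∂μT :=
      funext fun t => hardy_proj_formula K (hc t) x y
    rw [heq]
    exact h1
  · intro hJH
    refine ⟨hc, fun x y => ?_⟩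
    have h1 : Measurable fun t =>
        (inner ℂ (projTo (hardyIn K (J t)) (constL K x)) (constL K y) : ℂ) :=
      hJH.2 (constL K x) (constL K y)
    have heq : (fun t => (inner ℂ (projTo (hardyIn K (J t)) (constL K x)) (constL K y) : ℂ))
        = fun t => (inner ℂ (projTo (J t) x) y : ℂ) := by
      funext t
      rw [hardy_proj_formula K (hc t)]
      have hconst : ∀ v : K, (((constL K v : H2 K) : L2 K) : 𝕋 → K) =ᵐ[μT] fun _ => v := by
        intro v
        have hcoe : ((constL K v : H2 K) : L2 K) = expVec K 0 v := rfl
        rw [hcoe]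
        filter_upwards [coeFn_expVec K 0 v] with z hz
        rw [hz, fourier_zero, one_smul]
      have hae : (fun z => (inner ℂ (projTo (J t) ((((constL K x : H2 K) : L2 K) : 𝕋 → K) z))
            ((((constL K y : H2 K) : L2 K) : 𝕋 → K) z) : ℂ))
          =ᵐ[μT] fun _ => (inner ℂ (projTo (J t) x) y : ℂ) := by
        filter_upwards [hconst x, hconst y] with z h2 h3
        rw [h2, h3]
      rw [integral_congr_ae hae, integral_const]
      simp
    rw [heq] at h1
    exact h1

end Statements

end ShiftPaper
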